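/- If n is a positive integer with y(n) ≤ 0, then x(n) ≤ −r(n) − 3 ≤ −6, where x(n) = z(n) − (r(n)+1)·m(n). -/
import Mathlib


theorem stmt
    (z : ℕ → ℤ) (m r : ℕ → ℕ) (c x : ℕ → ℤ) (y : ℕ → ℚ)
    (hz : ∀ n : ℕ, 1 ≤ n → 3 * z n < 2 * (n : ℤ) ∧ ∀ w : ℤ, 3 * w < 2 * (n : ℤ) → w ≤ z n)
    (hm : ∀ n : ℕ, 1 ≤ n → (m n : ℤ) ^ 2 ≤ 2 * (n : ℤ) ∧ ∀ w : ℕ, (w : ℤ) ^ 2 ≤ 2 * (n : ℤ) → w ≤ m n)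
    (hr : ∀ n : ℕ, 1 ≤ n → n ≤ 2 ^ r n ∧ ∀ s : ℕ, n ≤ 2 ^ s → r n ≤ s)
    (hc : ∀ n : ℕ, c n = 2 * (n : ℤ) - 2 * z n + 2)
    (hx : ∀ n : ℕ, x n = z n - ((r n : ℤ) + 1) * (m n : ℤ))
    (hy : ∀ n : ℕ, y n = (2 : ℚ) ^ (c n - (m n : ℤ)) - (n : ℚ) ^ ((m n : ℤ) - 1)) :
    ∀ n : ℕ, 1 ≤ n → y n ≤ 0 → x n ≤ -(r n : ℤ) - 3 ∧ -(r n : ℤ) - 3 ≤ -6 := by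
  intro n hn hyn
  have hm1 : 1 ≤ m n := by
    have := (hm n hn).2 1 (by push_cast; omega)
    omega
  by_cases h4 : n ≤ 4
  · exfalso
    -- compute z n and m n for small n, contradict y n ≤ 0
    obtain ⟨hz1, hz2⟩ := hz n hn
    obtain ⟨hmA, hmB⟩ := hm n hn
    have hycn := hy n
    have hccn := hc n
    interval_cases n
    · have hze : z 1 = 0 := le_antisymm (by omega) (hz2 0 (by norm_num))
      have hmu : (m 1 : ℤ) ≤ 1 := (by push_cast at hmA; nlinarith [hmA, sq_nonneg ((m 1 : ℤ) - 1)] : (m 1 : ℤ) ≤ 1)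
      have hme : m 1 = 1 := by omega
      rw [hze] at hccn
      rw [hccn, hme] at hycn
      rw [hycn] at hyn
      norm_num at hyn
    · have hze : z 2 = 1 := le_antisymm (by omega) (hz2 1 (by norm_num))
      have hmu : (m 2 : ℤ) ≤ 2 := (by push_cast at hmA; nlinarith [hmA, sq_nonneg ((m 2 : ℤ) - 2)] : (m 2 : ℤ) ≤ 2)
      have hml : 2 ≤ m 2 := hmB 2 (by norm_num)
      have hme : m 2 = 2 := by omega
      rw [hze] at hccn
      rw [hccn, hme] at hycn
      rw [hycn] at hyn
      norm_num at hyn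
    · have hze : z 3 = 1 := le_antisymm (by omega) (hz2 1 (by norm_num))
      have hmu : (m 3 : ℤ) ≤ 2 := (by push_cast at hmA; nlinarith [hmA, sq_nonneg ((m 3 : ℤ) - 2)] : (m 3 : ℤ) ≤ 2)
      have hml : 2 ≤ m 3 := hmB 2 (by norm_num)
      have hme : m 3 = 2 := by omega
      rw [hze] at hccn
      rw [hccn, hme] at hycn
      rw [hycn] at hyn
      norm_num at hyn
    · have hze : z 4 = 2 := le_antisymm (by omega) (hz2 2 (by norm_num))
      have hmu : (m 4 : ℤ) ≤ 2 := (by push_cast at hmA; nlinarith [hmA, sq_nonneg ((m 4 : ℤ) - 2)] : (m 4 : ℤ) ≤ 2)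
      have hml : 2 ≤ m 4 := hmB 2 (by norm_num)
      have hme : m 4 = 2 := by omega
      rw [hze] at hccn
      rw [hccn, hme] at hycn
      rw [hycn] at hyn
      norm_num at hyn
  · -- n ≥ 5
    push_neg at h4
    obtain ⟨hrA, _⟩ := hr n hn
    have hr3 : 3 ≤ r n := by
      by_contra h
      push_neg at h
      have : 2 ^ r n ≤ 2 ^ 2 := Nat.pow_le_pow_right (by norm_num) (by omega)
      omega
    -- key inequality from y n ≤ 0
    have hY : (2 : ℚ) ^ (c n - (m n : ℤ)) ≤ (n : ℚ) ^ ((m n : ℤ) - 1) := by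
      have := hy n ▸ hyn
      linarith [sub_nonpos.mp this]
    set k : ℕ := m n - 1 with hk
    have hkc : ((m n : ℤ) - 1) = (k : ℤ) := by omega
    have hn2 : (n : ℚ) ^ (k : ℕ) ≤ ((2 : ℚ) ^ r n) ^ (k : ℕ) := by
      apply pow_le_pow_left₀ (by positivity)
      calc (n : ℚ) ≤ ((2 ^ r n : ℕ) : ℚ) := by exact_mod_cast hrA
        _ = (2 : ℚ) ^ r n := by push_cast; ring
    have hch : (2 : ℚ) ^ (c n - (m n : ℤ)) ≤ (2 : ℚ) ^ ((r n * k : ℕ) : ℤ) := by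
      calc (2 : ℚ) ^ (c n - (m n : ℤ)) ≤ (n : ℚ) ^ ((m n : ℤ) - 1) := hY
        _ = (n : ℚ) ^ (k : ℕ) := by rw [hkc, zpow_natCast]
        _ ≤ ((2 : ℚ) ^ r n) ^ (k : ℕ) := hn2
        _ = (2 : ℚ) ^ ((r n * k : ℕ) : ℤ) := by
            rw [← pow_mul, zpow_natCast]
    have hexp : c n - (m n : ℤ) ≤ ((r n * k : ℕ) : ℤ) :=
      (zpow_le_zpow_iff_right₀ (by norm_num : (1:ℚ) < 2)).mp hch
    have hcast : ((r n * k : ℕ) : ℤ) = (r n : ℤ) * ((m n : ℤ) - 1) := by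
      push_cast
      rw [hkc]
    rw [hcast] at hexp
    obtain ⟨hz1, _⟩ := hz n hn
    have hccn := hc n
    have hxn := hx n
    constructor
    · rw [hxn]
      nlinarith [hexp, hccn, hz1]
    · omega
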